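/- In the chapter-4 setup, assume additionally that the y_i are conditionally independent, i.e. p_i(y_i | x_{i−1}, z_i, θ) = p_i(y_i | z_i, θ) does not depend on x_{i−1} for every i. Fix i and let β_i be a bounded measurable function of (z₁,…,z_n, y₁,…,y_{i−1}, y_{i+1},…,y_n) (i.e. of the whole sample path except y_i), with E[|β_i| · ‖s_i(θ)‖] < ∞. Then E[ β_i · s_i(θ) ] = 0. -/

import Mathlib

open MeasureTheory
open scoped BigOperators

noncomputable section

open Filter Topology Metric

lemma fderiv_param_apply_measurable {α : Type*} [MeasurableSpace α] {m : ℕ}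
    {f : α → (Fin m → ℝ) → ℝ} {θ : Fin m → ℝ}
    (hf : ∀ t, Measurable fun a => f a t)
    (hd : ∀ a, DifferentiableAt ℝ (f a) θ) (v : Fin m → ℝ) :
    Measurable fun a => fderiv ℝ (f a) θ v := by
  have key : ∀ a, Tendsto
      (fun k : ℕ => (f a (θ + ((k : ℝ) + 1)⁻¹ • v) - f a θ) / ((k : ℝ) + 1)⁻¹)
      atTop (𝓝 (fderiv ℝ (f a) θ v)) := by
    intro a
    have hline : HasDerivAt (fun s : ℝ => θ + s • v) v 0 := by
      simpa using ((hasDerivAt_id (0 : ℝ)).smul_const v).const_add θ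
    have h1 : HasDerivAt (fun s : ℝ => f a (θ + s • v)) (fderiv ℝ (f a) θ v) 0 := by
      have h0 : HasFDerivAt (f a) (fderiv ℝ (f a) θ) (θ + (0:ℝ) • v) := by
        simpa using (hd a).hasFDerivAt
      have := h0.comp_hasDerivAt 0 hline
      exact this
    have h2 := hasDerivAt_iff_tendsto_slope.mp h1
    have h3 : Tendsto (fun k : ℕ => ((k : ℝ) + 1)⁻¹) atTop (𝓝[≠] (0 : ℝ)) := by
      apply tendsto_nhdsWithin_of_tendsto_nhds_of_eventually_within
      · simpa only [one_div] using tendsto_one_div_add_atTop_nhds_zero_nat (𝕜 := ℝ)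
      · exact Eventually.of_forall fun k => by
          simp only [Set.mem_compl_iff, Set.mem_singleton_iff]
          positivity
    have := h2.comp h3
    refine this.congr fun k => ?_
    simp [slope_def_field, Function.comp, div_eq_mul_inv, inv_inv, mul_comm]
  refine measurable_of_tendsto_metrizable
    (fun k => (((hf _).sub (hf _)).div_const _)) (tendsto_pi_nhds.2 key)

lemma sm_finset_sum {α γ ι : Type*} [MeasurableSpace α] [TopologicalSpace γ]
    [AddCommMonoid γ] [ContinuousAdd γ] (s : Finset ι) (g : ι → α → γ)
    (h : ∀ j, StronglyMeasurable (g j)) :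
    StronglyMeasurable (fun a => ∑ j ∈ s, g j a) := by
  classical
  induction s using Finset.induction_on with
  | empty => simpa using stronglyMeasurable_const
  | insert _ _ hj ih => simp only [Finset.sum_insert hj]; exact (h _).add ih

lemma sm_fderiv_param {α : Type*} [MeasurableSpace α] {m : ℕ}
    {f : α → (Fin m → ℝ) → ℝ} {θ : Fin m → ℝ}
    (hf : ∀ t, Measurable fun a => f a t)
    (hd : ∀ a, DifferentiableAt ℝ (f a) θ) :
    StronglyMeasurable fun a => fderiv ℝ (f a) θ := by
  have hrep : ∀ a, fderiv ℝ (f a) θ =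
      ∑ j : Fin m, (fderiv ℝ (f a) θ (Pi.single j 1)) •
        ContinuousLinearMap.proj (R := ℝ) (φ := fun _ : Fin m => ℝ) j := by
    intro a
    ext v
    rw [ContinuousLinearMap.sum_apply]
    simp only [ContinuousLinearMap.smul_apply, ContinuousLinearMap.proj_apply,
      smul_eq_mul]
    have hv : v = ∑ j : Fin m, v j • (Pi.single j (1 : ℝ) : Fin m → ℝ) := by
      funext k
      simp [Finset.sum_apply, Pi.single_apply, eq_comm]
    conv_lhs => rw [hv]
    rw [map_sum]
    refine Finset.sum_congr rfl fun j _ => ?_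
    rw [(fderiv ℝ (f a) θ).map_smul]
    simp [mul_comm]
  have : (fun a => fderiv ℝ (f a) θ) = fun a =>
      ∑ j : Fin m, (fderiv ℝ (f a) θ (Pi.single j 1)) •
        ContinuousLinearMap.proj (R := ℝ) (φ := fun _ : Fin m => ℝ) j := funext hrep
  rw [this]
  exact sm_finset_sum _ _ fun j =>
    ((fderiv_param_apply_measurable hf hd _).stronglyMeasurable).smul_const _

lemma integral_fderiv_density_zero {mm a : ℕ}
    (p : (Fin a → ℝ) → (Fin mm → ℝ) → ℝ)
    (hmeas : ∀ θ', Measurable fun y => p y θ')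
    (hdiff : ∀ y, Differentiable ℝ (p y))
    (hnorm : ∀ θ', ∫ y, p y θ' = 1)
    (θ : Fin mm → ℝ) (ε : ℝ) (hε : 0 < ε)
    (g : (Fin a → ℝ) → ℝ) (hg : Integrable g)
    (hbd : ∀ y θ', dist θ' θ < ε → ‖fderiv ℝ (p y) θ'‖ ≤ g y) :
    ∫ y, fderiv ℝ (p y) θ = 0 := by
  have hint : Integrable (fun y => p y θ) := by
    by_contra hc
    have := hnorm θ
    rw [integral_undef hc] at this
    exact one_ne_zero this.symm
  have key := hasFDerivAt_integral_of_dominated_of_fderiv_le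
    (F := fun t y => p y t) (F' := fun t y => fderiv ℝ (p y) t)
    (x₀ := θ) (bound := g) (μ := volume) (ball_mem_nhds θ hε)
    (Eventually.of_forall fun t => (hmeas t).aestronglyMeasurable)
    hint
    (sm_fderiv_param hmeas (fun y => (hdiff y).differentiableAt)).aestronglyMeasurable
    (Eventually.of_forall fun y => fun t ht => hbd y t (mem_ball.mp ht))
    hg
    (Eventually.of_forall fun y => fun t _ => ((hdiff y) t).hasFDerivAt)
  have hconst : HasFDerivAt (fun t => ∫ y, p y t) (0 : (Fin mm → ℝ) →L[ℝ] ℝ) θ := by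
    have : (fun t => ∫ y, p y t) = fun _ => (1 : ℝ) := funext fun t => hnorm t
    rw [this]
    exact hasFDerivAt_const 1 θ
  exact key.unique hconst


/-- The sample space of the chapter-4 setup: a tuple `ω = (z, y)` with
`z = (z₁,…,z_n)`, `z_{i+1} ∈ ℝ^{bb i}`, and `y = (y₁,…,y_n)`, `y_{i+1} ∈ ℝ^{aa i}`
(index `i : Fin n` stands for the paper's index `i+1`). -/
abbrev SamplePath (aa bb : ℕ → ℕ) (n : ℕ) :=
  ((i : Fin n) → (Fin (bb i.1) → ℝ)) × ((i : Fin n) → (Fin (aa i.1) → ℝ))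

/-- The recursively defined states: `x₀` is fixed and
`x_{i+1} = h_{i+1}(x_i, y_{i+1}, z_{i+1})`, where `h i` is the paper's `h_{i+1}`
(junk value `0` beyond index `n`). -/
def states (kk aa bb : ℕ → ℕ) (n : ℕ) (x₀ : Fin (kk 0) → ℝ)
    (h : (i : ℕ) → (Fin (kk i) → ℝ) → (Fin (aa i) → ℝ) → (Fin (bb i) → ℝ) →
      (Fin (kk (i + 1)) → ℝ))
    (ω : SamplePath aa bb n) : (i : ℕ) → Fin (kk i) → ℝ
  | 0 => x₀
  | (i + 1) =>
    if hi : i < n then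
      h i (states kk aa bb n x₀ h ω i) (ω.2 ⟨i, hi⟩) (ω.1 ⟨i, hi⟩)
    else 0

/-- **Proposition 4.2: under conditional independence, a baseline for the `i`-th score may
depend on everything in the sample path except `y_i`.**  In the chapter-4 setup (joint
density `ρ ω = μ(z)·∏ p_i(y_i | x_{i-1}, z_i, θ)`, scores
`S i ω = ∇_θ log p_i(y_i | x_{i-1}, z_i, θ)`), assume additionally that the `y_i` are
conditionally independent, i.e. `p_i(y_i | x_{i-1}, z_i, θ)` does not depend on `x_{i-1}`.
If `β` is a bounded measurable function of `(z₁,…,z_n, y₁,…,y_{i-1}, y_{i+1},…,y_n)` with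
`E[|β|·‖s_i(θ)‖] < ∞`, then `E[β·s_i(θ)] = 0`. -/
theorem stmt_18
    (n m : ℕ) (hn : 1 ≤ n) (kk aa bb : ℕ → ℕ)
    (x₀ : Fin (kk 0) → ℝ)
    (h : (i : ℕ) → (Fin (kk i) → ℝ) → (Fin (aa i) → ℝ) → (Fin (bb i) → ℝ) →
      (Fin (kk (i + 1)) → ℝ))
    (hh : ∀ i, Measurable (fun q : (Fin (kk i) → ℝ) × (Fin (aa i) → ℝ) × (Fin (bb i) → ℝ) =>
      h i q.1 q.2.1 q.2.2))
    (μ : ((i : Fin n) → (Fin (bb i.1) → ℝ)) → ℝ)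
    (hμ0 : ∀ z, 0 ≤ μ z) (hμ1 : ∫ z, μ z = 1)
    (p : (i : ℕ) → (Fin (aa i) → ℝ) → (Fin (kk i) → ℝ) → (Fin (bb i) → ℝ) →
      (Fin m → ℝ) → ℝ)
    (hp_pos : ∀ i y xx z θ', 0 < p i y xx z θ')
    (hp_diff : ∀ i y xx z, Differentiable ℝ (p i y xx z))
    (hp_meas : ∀ i θ', Measurable
      (fun q : (Fin (aa i) → ℝ) × (Fin (kk i) → ℝ) × (Fin (bb i) → ℝ) =>
        p i q.1 q.2.1 q.2.2 θ'))
    (hp_norm : ∀ i xx z θ', ∫ y, p i y xx z θ' = 1)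
    (θ : Fin m → ℝ) (ε : ℝ) (hε : 0 < ε)
    (g : (i : ℕ) → (Fin (kk i) → ℝ) → (Fin (bb i) → ℝ) → (Fin (aa i) → ℝ) → ℝ)
    (hg_int : ∀ i xx z, Integrable (g i xx z))
    (hg_bd : ∀ i y xx z, ∀ θ' : Fin m → ℝ, dist θ' θ < ε →
      ‖fderiv ℝ (p i y xx z) θ'‖ ≤ g i xx z y)
    (ρ : SamplePath aa bb n → ℝ)
    (hρ : ∀ ω, ρ ω =
      μ ω.1 * ∏ i : Fin n, p i.1 (ω.2 i) (states kk aa bb n x₀ h ω i.1) (ω.1 i) θ)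
    (S : Fin n → SamplePath aa bb n → ((Fin m → ℝ) →L[ℝ] ℝ))
    (hS : ∀ i ω, S i ω = fderiv ℝ
      (fun t => Real.log (p i.1 (ω.2 i) (states kk aa bb n x₀ h ω i.1) (ω.1 i) t)) θ)
    (hp_ci : ∀ i y xx xx' z θ', p i y xx z θ' = p i y xx' z θ')
    (i : Fin n)
    (β : SamplePath aa bb n → ℝ)
    (hβ_meas : Measurable β)
    (hβ_bd : ∃ C, ∀ ω, |β ω| ≤ C)
    (hβ_dep : ∀ (ω ω' : SamplePath aa bb n), ω.1 = ω'.1 →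
      (∀ t : Fin n, t ≠ i → ω.2 t = ω'.2 t) → β ω = β ω')
    (hint : Integrable (fun ω => ρ ω * (|β ω| * ‖S i ω‖))) :
    ∫ ω, ρ ω • (β ω • S i ω) = (0 : (Fin m → ℝ) →L[ℝ] ℝ) := by
  classical
  -- notation
  set F : SamplePath aa bb n → ((Fin m → ℝ) →L[ℝ] ℝ) :=
    fun ω => ρ ω • (β ω • S i ω) with hF
  -- conditional-independence versions of the densities and scores
  set q : (j : Fin n) → (Fin (aa j.1) → ℝ) → (Fin (bb j.1) → ℝ) → ℝ :=
    fun j a b => p j.1 a 0 b θ with hq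
  set Ψ : (Fin (bb i.1) → ℝ) → (Fin (aa i.1) → ℝ) → ((Fin m → ℝ) →L[ℝ] ℝ) :=
    fun b a => fderiv ℝ (fun t => Real.log (p i.1 a 0 b t)) θ with hΨ
  have hSeq : ∀ ω : SamplePath aa bb n, S i ω = Ψ (ω.1 i) (ω.2 i) := by
    intro ω
    rw [hS]
    congr 1
    funext t
    rw [hp_ci i.1 (ω.2 i) _ 0 (ω.1 i) t]
  have hρeq : ∀ ω : SamplePath aa bb n,
      ρ ω = μ ω.1 * ∏ j : Fin n, q j (ω.2 j) (ω.1 j) := by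
    intro ω
    rw [hρ]
    congr 1
    exact Finset.prod_congr rfl fun j _ => hp_ci j.1 (ω.2 j) _ 0 (ω.1 j) θ
  have hρeq' : ∀ z y, ρ (z, y) = μ z * ∏ j : Fin n, q j (y j) (z j) :=
    fun z y => hρeq (z, y)
  have hSeq' : ∀ z y, S i (z, y) = Ψ (z i) (y i) := fun z y => hSeq (z, y)
  have hρ0 : ∀ ω, 0 ≤ ρ ω := by
    intro ω
    rw [hρ]
    exact mul_nonneg (hμ0 _) (Finset.prod_nonneg fun j _ => (hp_pos _ _ _ _ _).le)
  -- measurability of the score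
  have hSsm : StronglyMeasurable fun ω : SamplePath aa bb n => Ψ (ω.1 i) (ω.2 i) := by
    apply sm_fderiv_param
      (f := fun (ω : SamplePath aa bb n) (t : Fin m → ℝ) =>
        Real.log (p i.1 (ω.2 i) 0 (ω.1 i) t))
    · intro t
      have hmt : Measurable fun ω : SamplePath aa bb n =>
          ((ω.2 i, ((0 : Fin (kk i.1) → ℝ), ω.1 i)) :
            (Fin (aa i.1) → ℝ) × (Fin (kk i.1) → ℝ) × (Fin (bb i.1) → ℝ)) := by
        exact ((measurable_pi_apply i).comp measurable_snd).prodMk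
          (measurable_const.prodMk ((measurable_pi_apply i).comp measurable_fst))
      exact Real.measurable_log.comp ((hp_meas i.1 t).comp hmt)
    · intro ω
      exact (((hp_diff i.1 (ω.2 i) 0 (ω.1 i)) θ).log (ne_of_gt (hp_pos _ _ _ _ _)))
  -- measurability of the product of densities
  have hP_meas : Measurable fun ω : SamplePath aa bb n =>
      ∏ j : Fin n, q j (ω.2 j) (ω.1 j) := by
    apply Finset.measurable_prod
    intro j _
    have hmt : Measurable fun ω : SamplePath aa bb n =>
        ((ω.2 j, ((0 : Fin (kk j.1) → ℝ), ω.1 j)) :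
          (Fin (aa j.1) → ℝ) × (Fin (kk j.1) → ℝ) × (Fin (bb j.1) → ℝ)) :=
      ((measurable_pi_apply j).comp measurable_snd).prodMk
        (measurable_const.prodMk ((measurable_pi_apply j).comp measurable_fst))
    exact (hp_meas j.1 θ).comp hmt
  -- μ is integrable (its integral is 1 ≠ 0), hence a.e. strongly measurable
  have hμ_int : Integrable μ := by
    by_contra hc
    rw [integral_undef hc] at hμ1
    exact one_ne_zero hμ1.symm
  -- F is a.e. strongly measurable
  have hG : StronglyMeasurable fun ω : SamplePath aa bb n =>
      ((∏ j : Fin n, q j (ω.2 j) (ω.1 j)) * β ω) • Ψ (ω.1 i) (ω.2 i) :=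
    ((hP_meas.mul hβ_meas).stronglyMeasurable).smul hSsm
  have hFdecomp : F = fun ω =>
      (μ ω.1) • (((∏ j : Fin n, q j (ω.2 j) (ω.1 j)) * β ω) • Ψ (ω.1 i) (ω.2 i)) := by
    funext ω
    simp only [hF]
    rw [hρeq ω, hSeq ω, smul_smul, smul_smul, mul_assoc]
  have hμfst : AEStronglyMeasurable (fun ω : SamplePath aa bb n => μ ω.1) volume := by
    rw [Measure.volume_eq_prod]
    exact hμ_int.1.comp_quasiMeasurePreserving Measure.quasiMeasurePreserving_fst
  have hFaesm : AEStronglyMeasurable F volume := by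
    rw [hFdecomp]
    exact hμfst.smul hG.aestronglyMeasurable
  -- F is integrable
  have hFint : Integrable F := by
    refine hint.mono' hFaesm (Eventually.of_forall fun ω => ?_)
    simp only [hF]
    have heq : ‖ρ ω • β ω • S i ω‖ = ρ ω * (|β ω| * ‖S i ω‖) := by
      rw [norm_smul (ρ ω) (β ω • S i ω), norm_smul (β ω) (S i ω)]
      simp [Real.norm_eq_abs, abs_of_nonneg (hρ0 ω)]
    exact le_of_eq heq
  -- Step 1: Fubini in z
  rw [show (volume : Measure (SamplePath aa bb n)) = Measure.prod volume volume from
    Measure.volume_eq_prod _ _] at hFint ⊢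
  rw [integral_prod F hFint]
  -- it suffices to show the inner integral vanishes a.e.
  refine integral_eq_zero_of_ae ?_
  filter_upwards [hFint.prod_right_ae] with z hz
  -- Step 2: split off coordinate i of y
  set T := {j : Fin n // ¬ j ≠ i} with hT
  letI : Unique T :=
    ⟨⟨⟨i, not_not_intro rfl⟩⟩, fun a => Subtype.ext (not_not.mp a.2)⟩
  set e := MeasurableEquiv.piEquivPiSubtypeProd
    (fun j : Fin n => Fin (aa j.1) → ℝ) (fun j => j ≠ i) with he
  have hem : MeasurePreserving e volume volume :=
    volume_preserving_piEquivPiSubtypeProd _ _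
  have hys : ∀ (u) (w) (j : Fin n) (hj : j ≠ i),
      e.symm (u, w) j = u ⟨j, hj⟩ := by
    intro u w j hj
    simp only [he, MeasurableEquiv.piEquivPiSubtypeProd,
      MeasurableEquiv.symm_mk, MeasurableEquiv.coe_mk, Equiv.symm_symm]
    exact dif_pos hj
  have hyi : ∀ (u) (w : (j : T) → Fin (aa j.1.1) → ℝ),
      e.symm (u, w) i = w default := by
    intro u w
    have : e.symm (u, w) i = w ⟨i, not_not_intro rfl⟩ := by
      simp only [he, MeasurableEquiv.piEquivPiSubtypeProd,
        MeasurableEquiv.symm_mk, MeasurableEquiv.coe_mk, Equiv.symm_symm]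
      exact dif_neg (not_not_intro rfl)
    rw [this]
    rfl
  calc ∫ y, F (z, y)
      = ∫ uw, F (z, e.symm uw) := ((hem.symm e).integral_comp' fun y => F (z, y)).symm
    _ = 0 := by
        have hz2 : Integrable (fun uw => F (z, e.symm uw)) volume := by
          have := ((hem.symm e).integrable_comp_emb e.symm.measurableEmbedding
            (g := fun y => F (z, y))).mpr hz
          exact this
        rw [show (volume : Measure (((j : {j : Fin n // j ≠ i}) → Fin (aa j.1.1) → ℝ) ×
            ((j : T) → Fin (aa j.1.1) → ℝ))) = Measure.prod volume volume from
          Measure.volume_eq_prod _ _] at hz2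
        rw [show (∫ uw, F (z, e.symm uw)) =
          ∫ uw, F (z, e.symm uw) ∂(Measure.prod volume volume) from by
            rw [← Measure.volume_eq_prod]]
        rw [integral_prod _ hz2]
        have key : ∀ u, (∫ w, F (z, e.symm (u, w))) = 0 := by
          intro u
          set y₀ := e.symm (u, fun j : T => (0 : Fin (aa j.1.1) → ℝ)) with hy₀
          set c : ℝ := μ z * ((∏ j ∈ Finset.univ.erase i, q j (y₀ j) (z j)) * β (z, y₀))
            with hc
          set Φ : (Fin (aa i.1) → ℝ) → ((Fin m → ℝ) →L[ℝ] ℝ) :=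
            fun a => fderiv ℝ (fun t => p i.1 a 0 (z i) t) θ with hΦ
          have hscore : ∀ a, q i a (z i) • Ψ (z i) a = Φ a := by
            intro a
            have hD := ((hp_diff i.1 a 0 (z i)) θ).hasFDerivAt
            have hlog := hD.log (ne_of_gt (hp_pos i.1 a 0 (z i) θ))
            rw [hΨ, hΦ]
            simp only []
            rw [hlog.fderiv, smul_smul, hq]
            simp only []
            rw [mul_inv_cancel₀ (ne_of_gt (hp_pos i.1 a 0 (z i) θ)), one_smul]
          have hpoint : ∀ w, F (z, e.symm (u, w)) = c • Φ (w default) := by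
            intro w
            have hprod : (∏ j : Fin n, q j (e.symm (u, w) j) (z j)) =
                q i (e.symm (u, w) i) (z i) *
                  ∏ j ∈ Finset.univ.erase i, q j (y₀ j) (z j) := by
              rw [← Finset.mul_prod_erase Finset.univ _ (Finset.mem_univ i)]
              congr 1
              refine Finset.prod_congr rfl fun j hj => ?_
              have hji : j ≠ i := Finset.ne_of_mem_erase hj
              rw [hys u w j hji, hy₀, hys u _ j hji]
            have hβeq : β (z, e.symm (u, w)) = β (z, y₀) := by
              refine hβ_dep _ _ rfl fun t ht => ?_
              show e.symm (u, w) t = y₀ t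
              rw [hys u w t ht, hy₀, hys u _ t ht]
            simp only [hF]
            rw [hρeq' z (e.symm (u, w)), hSeq' z (e.symm (u, w))]
            rw [hprod, hβeq, hyi u w]
            rw [smul_smul, ← hscore (w default), smul_smul]
            congr 1
            rw [hc, hq]
            ring
          rw [show (fun w => F (z, e.symm (u, w))) = fun w => c • Φ (w default) from
            funext hpoint]
          rw [integral_smul]
          have hzero : (∫ w : (j : T) → Fin (aa j.1.1) → ℝ, Φ (w default)) = 0 := by
            have hmp := volume_preserving_piUnique (fun j : T => Fin (aa j.1.1) → ℝ)
            have := hmp.integral_comp' (f := MeasurableEquiv.piUnique _) Φ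
            rw [show (fun w : (j : T) → Fin (aa j.1.1) → ℝ => Φ (w default)) =
              fun w => Φ (MeasurableEquiv.piUnique (fun j : T => Fin (aa j.1.1) → ℝ) w)
              from rfl]
            rw [this]
            have hmeas' : ∀ t : Fin m → ℝ,
                Measurable fun a : Fin (aa i.1) → ℝ => p i.1 a 0 (z i) t := by
              intro t
              have hmt : Measurable fun a : Fin (aa i.1) → ℝ =>
                  ((a, ((0 : Fin (kk i.1) → ℝ), z i)) :
                    (Fin (aa i.1) → ℝ) × (Fin (kk i.1) → ℝ) × (Fin (bb i.1) → ℝ)) :=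
                measurable_id.prodMk measurable_const
              exact (hp_meas i.1 t).comp hmt
            exact integral_fderiv_density_zero (fun a t => p i.1 a 0 (z i) t)
              hmeas' (fun a => hp_diff i.1 a 0 (z i)) (fun t => hp_norm i.1 0 (z i) t)
              θ ε hε (g i.1 0 (z i)) (hg_int i.1 0 (z i))
              (fun a t ht => hg_bd i.1 a 0 (z i) t ht)
          rw [hzero, smul_zero]
        rw [show (fun u => ∫ w, F (z, e.symm (u, w))) = fun _ => (0 : (Fin m → ℝ) →L[ℝ] ℝ)
          from funext key]
        exact integral_zero _ _
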